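/- Fix a ∈ (0,1/2) and let ρ be the V-path quasi-metric on the dyadic rationals of [0,1]. Suppose z_0, z_1, z_2 form a special triangle: z_1 lies on the left path from z_0, z_2 lies on the right path from z_0, and z_2 lies on the right path from z_1. Let n = ℓ(z_0) and m = ℓ(z_1). Then ρ(z_1,z_0) + ρ(z_0,z_2) − ρ(z_1,z_2) = τ_n − τ_m ≤ 0, where τ_k = a + ⋯ + a^{k-1} + 2a^k. -/

import Mathlib

/-- A rational is dyadic if it can be written as `k / 2^n`. -/
def IsDyadic (q : ℚ) : Prop := ∃ (k : ℤ) (n : ℕ), q = (k : ℚ) / 2 ^ n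

/-- Membership in `Z`, the set of dyadic rationals of `[0,1]`. -/
def InZ (q : ℚ) : Prop := 0 ≤ q ∧ q ≤ 1 ∧ IsDyadic q

/-- The level of a dyadic rational: the least `n` with `q = k / 2^n` for some
integer `k`.  The endpoints `0` and `1` have level `0`. -/
noncomputable def level (q : ℚ) : ℕ := sInf {n : ℕ | ∃ k : ℤ, q = (k : ℚ) / 2 ^ n}

/-- The left neighbor `l(z) = (k-1)/2^n` of `z = k/2^n` (in lowest terms,
`k` odd, `n ≥ 1`); points of level `0` are fixed. -/
noncomputable def lnb (q : ℚ) : ℚ :=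
  if level q = 0 then q else q - (1 / 2 : ℚ) ^ level q

/-- The right neighbor `r(z) = (k+1)/2^n` of `z = k/2^n` (in lowest terms,
`k` odd, `n ≥ 1`); points of level `0` are fixed. -/
noncomputable def rnb (q : ℚ) : ℚ :=
  if level q = 0 then q else q + (1 / 2 : ℚ) ^ level q

/-- `ρ` is the V-path quasi-metric on the dyadic rationals of `[0,1]` with
parameter `a`: it is symmetric, vanishes on the diagonal, is nonnegative on
`Z`, satisfies `ρ(0,1) = 1`, and decomposes along the unique V-shaped path:
for `z < z'` in `Z` the first edge taken from the higher-level endpoint has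
length `a^level`. These properties characterize the sum of edge lengths
`a^{ℓ(w)}` along the V-shaped path joining `z` and `z'`. -/
def IsVPath (a : ℝ) (ρ : ℚ → ℚ → ℝ) : Prop :=
  (∀ z z', ρ z z' = ρ z' z) ∧
  (∀ z, ρ z z = 0) ∧
  (∀ z z', InZ z → InZ z' → 0 ≤ ρ z z') ∧
  ρ 0 1 = 1 ∧
  (∀ z z', InZ z → InZ z' → z < z' → 1 ≤ level z → level z' ≤ level z →
    ρ z z' = a ^ level z + ρ (rnb z) z') ∧
  (∀ z z', InZ z → InZ z' → z < z' → level z < level z' →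
    ρ z z' = ρ z (lnb z') + a ^ level z')

/-- `τ_n = a + a² + ⋯ + a^{n-1} + 2 a^n`. -/
noncomputable def tau (a : ℝ) (n : ℕ) : ℝ :=
  (∑ i ∈ Finset.Ico 1 n, a ^ i) + 2 * a ^ n

section Aux

lemma inZ_zero : InZ 0 := ⟨le_refl _, by norm_num, 0, 0, by norm_num⟩
lemma inZ_one : InZ 1 := ⟨by norm_num, le_refl _, 1, 0, by norm_num⟩

lemma level_le {q : ℚ} {k : ℤ} {n : ℕ} (h : q = (k : ℚ) / 2 ^ n) : level q ≤ n :=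
  Nat.sInf_le ⟨k, h⟩

lemma level_zero : level (0 : ℚ) = 0 :=
  Nat.le_zero.mp (level_le (k := 0) (n := 0) (by norm_num))

lemma level_one : level (1 : ℚ) = 0 :=
  Nat.le_zero.mp (level_le (k := 1) (n := 0) (by norm_num))

lemma level_eq_of_odd {q : ℚ} {k : ℤ} {n : ℕ} (hk : Odd k) (h : q = (k : ℚ) / 2 ^ n) :
    level q = n := by
  refine le_antisymm (level_le h) (le_csInf ⟨n, k, h⟩ ?_)
  rintro j ⟨k', hk'⟩
  by_contra hj
  push_neg at hj
  have hpow : (2 : ℚ) ^ n = 2 ^ (n - j) * 2 ^ j := by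
    rw [← pow_add]; congr 1; omega
  have e : (k : ℚ) = (k' : ℚ) * 2 ^ (n - j) := by
    have h1 : (k' : ℚ) / 2 ^ j = (k : ℚ) / 2 ^ n := by rw [← h, ← hk']
    rw [div_eq_div_iff (by positivity) (by positivity)] at h1
    rw [hpow, ← mul_assoc] at h1
    exact (mul_right_cancel₀ (by positivity) h1).symm
  have e2 : k = k' * 2 ^ (n - j) := by exact_mod_cast e
  have hdvd : (2 : ℤ) ∣ k := by
    rw [e2]
    exact Dvd.dvd.mul_left (dvd_pow_self 2 (by omega : n - j ≠ 0)) k'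
  obtain ⟨c, hc⟩ := hdvd
  exact (Int.not_even_iff_odd.mpr hk) ⟨c, by omega⟩

lemma level_rep {q : ℚ} (h : IsDyadic q) : ∃ k : ℤ, q = (k : ℚ) / 2 ^ level q := by
  have hne : {n : ℕ | ∃ k : ℤ, q = (k : ℚ) / 2 ^ n}.Nonempty := by
    obtain ⟨k, n, hk⟩ := h; exact ⟨n, k, hk⟩
  exact Nat.sInf_mem hne

lemma level_rep_odd {q : ℚ} (h : IsDyadic q) (hl : 1 ≤ level q) :
    ∃ k : ℤ, Odd k ∧ q = (k : ℚ) / 2 ^ level q := by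
  obtain ⟨k, hk⟩ := level_rep h
  rcases Int.even_or_odd k with he | ho
  · exfalso
    obtain ⟨t, ht⟩ := he
    obtain ⟨m, hm⟩ : ∃ m, level q = m + 1 := ⟨level q - 1, by omega⟩
    have hk' : q = ((k : ℚ)) / 2 ^ (m + 1) := by rw [← hm]; exact hk
    have hq2 : q = (t : ℚ) / 2 ^ m := by
      rw [hk', ht]
      push_cast
      rw [pow_succ]
      field_simp
      ring
    have := level_le hq2
    omega
  · exact ⟨k, ho, hk⟩

lemma zero_lt_of_level {q : ℚ} (hq : InZ q) (hl : 1 ≤ level q) : 0 < q ∧ q < 1 := by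
  constructor
  · rcases lt_or_eq_of_le hq.1 with h | h
    · exact h
    · exfalso; rw [← h, level_zero] at hl; omega
  · rcases lt_or_eq_of_le hq.2.1 with h | h
    · exact h
    · exfalso; rw [h, level_one] at hl; omega

lemma lnb_of_pos {q : ℚ} (hl : 1 ≤ level q) : lnb q = q - (1 / 2 : ℚ) ^ level q := by
  rw [lnb, if_neg (by omega)]

lemma rnb_of_pos {q : ℚ} (hl : 1 ≤ level q) : rnb q = q + (1 / 2 : ℚ) ^ level q := by
  rw [rnb, if_neg (by omega)]

lemma key_rep {q : ℚ} (hq : InZ q) (hl : 1 ≤ level q) :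
    ∃ (t : ℤ) (m : ℕ), level q = m + 1 ∧
      lnb q = (t : ℚ) / 2 ^ m ∧ rnb q = ((t + 1 : ℤ) : ℚ) / 2 ^ m ∧
      0 ≤ t ∧ t + 1 ≤ 2 ^ m := by
  obtain ⟨k, hodd, hk⟩ := level_rep_odd hq.2.2 hl
  obtain ⟨t, ht⟩ := hodd
  obtain ⟨m, hm⟩ : ∃ m, level q = m + 1 := ⟨level q - 1, by omega⟩
  have hk' : q = ((k : ℚ)) / 2 ^ (m + 1) := by rw [← hm]; exact hk
  have h01 := zero_lt_of_level hq hl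
  have hkpos : 0 < k := by
    by_contra hneg
    push_neg at hneg
    have hq0 : q ≤ 0 := by
      rw [hk']
      apply div_nonpos_of_nonpos_of_nonneg
      · exact_mod_cast hneg
      · positivity
    linarith [h01.1]
  have hkub : k < 2 ^ (m + 1) := by
    have h2 : (k : ℚ) < 2 ^ (m + 1) := by
      have hlt := h01.2
      rw [hk', div_lt_one (by positivity)] at hlt
      exact_mod_cast hlt
    exact_mod_cast h2
  refine ⟨t, m, hm, ?_, ?_, by omega, ?_⟩
  · rw [lnb_of_pos hl, hm, hk', ht]
    push_cast
    rw [pow_succ]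
    simp only [one_div, inv_pow]
    field_simp
    ring
  · rw [rnb_of_pos hl, hm, hk', ht]
    push_cast
    rw [pow_succ]
    simp only [one_div, inv_pow]
    field_simp
    ring
  · have h2m : (2 : ℤ) ^ (m + 1) = 2 * 2 ^ m := by rw [pow_succ]; ring
    have h3 : k + 1 ≤ 2 * 2 ^ m := by rw [← h2m]; exact Int.add_one_le_iff.mpr hkub
    rw [ht] at h3
    linarith

lemma level_lnb_lt {q : ℚ} (hq : InZ q) (hl : 1 ≤ level q) : level (lnb q) < level q := by
  obtain ⟨t, m, hm, hln, _, _, _⟩ := key_rep hq hl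
  have := level_le hln
  omega

lemma level_rnb_lt {q : ℚ} (hq : InZ q) (hl : 1 ≤ level q) : level (rnb q) < level q := by
  obtain ⟨t, m, hm, _, hrn, _, _⟩ := key_rep hq hl
  have := level_le hrn
  omega

lemma inZ_lnb {q : ℚ} (hq : InZ q) : InZ (lnb q) := by
  by_cases h : level q = 0
  · rw [lnb, if_pos h]; exact hq
  · have hl : 1 ≤ level q := by omega
    obtain ⟨t, m, hm, hln, hrn, ht0, ht1⟩ := key_rep hq hl
    refine ⟨?_, ?_, t, m, hln⟩
    · rw [hln]
      apply div_nonneg _ (by positivity)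
      exact_mod_cast ht0
    · rw [hln, div_le_one (by positivity)]
      have h2 : (t : ℚ) + 1 ≤ 2 ^ m := by exact_mod_cast ht1
      linarith

lemma inZ_rnb {q : ℚ} (hq : InZ q) : InZ (rnb q) := by
  by_cases h : level q = 0
  · rw [rnb, if_pos h]; exact hq
  · have hl : 1 ≤ level q := by omega
    obtain ⟨t, m, hm, hln, hrn, ht0, ht1⟩ := key_rep hq hl
    refine ⟨?_, ?_, t + 1, m, hrn⟩
    · rw [hrn]
      apply div_nonneg _ (by positivity)
      have : (0 : ℤ) ≤ t + 1 := by omega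
      exact_mod_cast this
    · rw [hrn, div_le_one (by positivity)]
      exact_mod_cast ht1

lemma lnb_le (q : ℚ) : lnb q ≤ q := by
  rw [lnb]
  split
  · exact le_refl _
  · have : (0 : ℚ) < (1 / 2 : ℚ) ^ level q := by positivity
    linarith

lemma rnb_ge (q : ℚ) : q ≤ rnb q := by
  rw [rnb]
  split
  · exact le_refl _
  · have : (0 : ℚ) < (1 / 2 : ℚ) ^ level q := by positivity
    linarith

lemma lnb_lt {q : ℚ} (hl : 1 ≤ level q) : lnb q < q := by
  rw [lnb_of_pos hl]
  have : (0 : ℚ) < (1 / 2 : ℚ) ^ level q := by positivity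
  linarith

lemma rnb_gt {q : ℚ} (hl : 1 ≤ level q) : q < rnb q := by
  rw [rnb_of_pos hl]
  have : (0 : ℚ) < (1 / 2 : ℚ) ^ level q := by positivity
  linarith

lemma level_lnb_le {q : ℚ} (hq : InZ q) : level (lnb q) ≤ level q := by
  by_cases h : level q = 0
  · rw [lnb, if_pos h]
  · exact le_of_lt (level_lnb_lt hq (by omega))

lemma level_rnb_le {q : ℚ} (hq : InZ q) : level (rnb q) ≤ level q := by
  by_cases h : level q = 0
  · rw [rnb, if_pos h]
  · exact le_of_lt (level_rnb_lt hq (by omega))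

lemma iter_lnb (i : ℕ) {q : ℚ} (hq : InZ q) :
    InZ (lnb^[i] q) ∧ lnb^[i] q ≤ q ∧ level (lnb^[i] q) ≤ level q := by
  induction i with
  | zero => exact ⟨hq, le_refl _, le_refl _⟩
  | succ i ih =>
    rw [Function.iterate_succ_apply']
    exact ⟨inZ_lnb ih.1, le_trans (lnb_le _) ih.2.1,
      le_trans (level_lnb_le ih.1) ih.2.2⟩

lemma iter_rnb (i : ℕ) {q : ℚ} (hq : InZ q) :
    InZ (rnb^[i] q) ∧ q ≤ rnb^[i] q ∧ level (rnb^[i] q) ≤ level q := by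
  induction i with
  | zero => exact ⟨hq, le_refl _, le_refl _⟩
  | succ i ih =>
    rw [Function.iterate_succ_apply']
    exact ⟨inZ_rnb ih.1, le_trans ih.2.1 (rnb_ge _),
      le_trans (level_rnb_le ih.1) ih.2.2⟩

lemma left_add {a : ℝ} {ρ : ℚ → ℚ → ℝ} (hρ : IsVPath a ρ) :
    ∀ (i : ℕ) (z : ℚ), InZ z → ρ 0 z = ρ 0 (lnb^[i] z) + ρ (lnb^[i] z) z := by
  obtain ⟨hs, hd, hnn, h01, hR, hL⟩ := hρ
  intro i
  induction i with
  | zero => intro z hz; simp [hd]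
  | succ i ih =>
    intro z hz
    rw [Function.iterate_succ_apply]
    by_cases h0 : level z = 0
    · rw [show lnb z = z from by rw [lnb, if_pos h0]]
      exact ih z hz
    · have hl : 1 ≤ level z := by omega
      have hw : InZ (lnb z) := inZ_lnb hz
      obtain ⟨hu, hule, hulev⟩ := iter_lnb i hw
      have hpos := zero_lt_of_level hz hl
      have h0z : ρ 0 z = ρ 0 (lnb z) + a ^ level z :=
        hL 0 z inZ_zero hz hpos.1 (by rw [level_zero]; omega)
      have huz : ρ (lnb^[i] (lnb z)) z = ρ (lnb^[i] (lnb z)) (lnb z) + a ^ level z :=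
        hL _ z hu hz (lt_of_le_of_lt hule (lnb_lt hl))
          (lt_of_le_of_lt hulev (level_lnb_lt hz hl))
      rw [h0z, ih (lnb z) hw, huz]
      ring

lemma right_add {a : ℝ} {ρ : ℚ → ℚ → ℝ} (hρ : IsVPath a ρ) :
    ∀ (i : ℕ) (z : ℚ), InZ z → ρ z 1 = ρ z (rnb^[i] z) + ρ (rnb^[i] z) 1 := by
  obtain ⟨hs, hd, hnn, h01, hR, hL⟩ := hρ
  intro i
  induction i with
  | zero => intro z hz; simp [hd]
  | succ i ih =>
    intro z hz
    rw [Function.iterate_succ_apply]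
    by_cases h0 : level z = 0
    · rw [show rnb z = z from by rw [rnb, if_pos h0]]
      exact ih z hz
    · have hl : 1 ≤ level z := by omega
      have hw : InZ (rnb z) := inZ_rnb hz
      obtain ⟨hu, hule, hulev⟩ := iter_rnb i hw
      have hpos := zero_lt_of_level hz hl
      have hz1 : ρ z 1 = a ^ level z + ρ (rnb z) 1 :=
        hR z 1 hz inZ_one hpos.2 hl (by rw [level_one]; omega)
      have hzu : ρ z (rnb^[i] (rnb z)) = a ^ level z + ρ (rnb z) (rnb^[i] (rnb z)) :=
        hR z _ hz hu (lt_of_lt_of_le (rnb_gt hl) hule) hl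
          (le_of_lt (lt_of_le_of_lt hulev (level_rnb_lt hz hl)))
      rw [hz1, ih (rnb z) hw, hzu]
      ring

lemma tau_fact {a : ℝ} {ρ : ℚ → ℚ → ℝ} (hρ : IsVPath a ρ) :
    ∀ (n : ℕ) (z : ℚ), InZ z → level z = n → 1 ≤ n → ρ 0 z + ρ z 1 = tau a n := by
  obtain ⟨hs, hd, hnn, h01, hR, hL⟩ := hρ
  intro n
  induction n using Nat.strong_induction_on with
  | _ n ih =>
    intro z hz hlev hn
    have hl : 1 ≤ level z := by omega
    obtain ⟨t, m, hm, hln, hrn, ht0, ht1⟩ := key_rep hz hl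
    have hpos := zero_lt_of_level hz hl
    have e1 : ρ 0 z = ρ 0 (lnb z) + a ^ level z :=
      hL 0 z inZ_zero hz hpos.1 (by rw [level_zero]; omega)
    have e2 : ρ z 1 = a ^ level z + ρ (rnb z) 1 :=
      hR z 1 hz inZ_one hpos.2 hl (by rw [level_one]; omega)
    have key2 : ρ 0 (lnb z) + ρ (rnb z) 1 = ∑ i ∈ Finset.Ico 1 n, a ^ i := by
      rcases Nat.eq_zero_or_pos m with hm0 | hmpos
      · -- n = 1
        subst hm0
        have ht : t = 0 := by
          have : (2 : ℤ) ^ 0 = 1 := rfl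
          omega
        have hl0 : lnb z = 0 := by rw [hln, ht]; norm_num
        have hr1 : rnb z = 1 := by rw [hrn, ht]; norm_num
        have hn1 : n = 1 := by omega
        rw [hl0, hr1, hd, hd, hn1]
        simp
      · have hmn : m < n := by omega
        have hnm : n = m + 1 := by omega
        have hsum : ∑ i ∈ Finset.Ico 1 n, a ^ i = (∑ i ∈ Finset.Ico 1 m, a ^ i) + a ^ m := by
          rw [hnm, Finset.sum_Ico_succ_top (by omega)]
        rcases Int.even_or_odd t with hev | hod
        · -- t even, so t+1 odd : level (rnb z) = m
          have hodd : Odd (t + 1) := Even.add_one hev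
          have hlr : level (rnb z) = m := level_eq_of_odd hodd hrn
          have hzr : InZ (rnb z) := inZ_rnb hz
          have ihr := ih m hmn (rnb z) hzr hlr hmpos
          have hrpos := zero_lt_of_level hzr (by omega)
          have e3 : ρ 0 (rnb z) = ρ 0 (lnb (rnb z)) + a ^ level (rnb z) :=
            hL 0 (rnb z) inZ_zero hzr hrpos.1 (by rw [level_zero]; omega)
          have e4 : lnb (rnb z) = lnb z := by
            rw [lnb_of_pos (by omega : 1 ≤ level (rnb z)), hlr, hrn, hln]
            push_cast
            simp only [one_div, inv_pow]
            field_simp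
            ring
          rw [e4, hlr] at e3
          rw [hsum]
          rw [tau] at ihr
          linarith
        · -- t odd : level (lnb z) = m
          have hll : level (lnb z) = m := level_eq_of_odd hod hln
          have hzl : InZ (lnb z) := inZ_lnb hz
          have ihl := ih m hmn (lnb z) hzl hll hmpos
          have hlpos := zero_lt_of_level hzl (by omega)
          have e3 : ρ (lnb z) 1 = a ^ level (lnb z) + ρ (rnb (lnb z)) 1 :=
            hR (lnb z) 1 hzl inZ_one hlpos.2 (by omega) (by rw [level_one]; omega)
          have e4 : rnb (lnb z) = rnb z := by
            rw [rnb_of_pos (by omega : 1 ≤ level (lnb z)), hll, hrn, hln]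
            push_cast
            simp only [one_div, inv_pow]
            field_simp
          rw [e4, hll] at e3
          rw [hsum]
          rw [tau] at ihl
          linarith
    rw [e1, e2, hlev, tau]
    linarith

lemma tau_anti {a : ℝ} (ha0 : 0 < a) (ha : a < 1 / 2) : Antitone (tau a) := by
  apply antitone_nat_of_succ_le
  intro p
  rcases Nat.eq_zero_or_pos p with hp0 | hp0
  · subst hp0
    rw [tau, tau]
    norm_num
    linarith
  · rw [tau, tau, Finset.sum_Ico_succ_top hp0]
    have hp : (0 : ℝ) < a ^ p := pow_pos ha0 p
    have hps : a ^ (p + 1) = a ^ p * a := pow_succ a p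
    nlinarith

end Aux

/-- For a special triangle `z_1 = l^i(z_0)`, `z_2 = r^j(z_0) = r^k(z_1)` with
`n = ℓ(z_0)`, `m = ℓ(z_1)` (both `≥ 1`):
`ρ(z_1,z_0) + ρ(z_0,z_2) − ρ(z_1,z_2) = τ_n − τ_m ≤ 0`. -/
theorem special_triangle (a : ℝ) (ha0 : 0 < a) (ha : a < 1 / 2)
    (ρ : ℚ → ℚ → ℝ) (hρ : IsVPath a ρ)
    (z0 z1 z2 : ℚ) (hz0 : InZ z0) (hz1 : InZ z1) (hz2 : InZ z2)
    (h1 : ∃ i : ℕ, z1 = lnb^[i] z0)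
    (h2 : ∃ j : ℕ, z2 = rnb^[j] z0)
    (h3 : ∃ k : ℕ, z2 = rnb^[k] z1)
    (hl0 : 1 ≤ level z0) (hl1 : 1 ≤ level z1) :
    ρ z1 z0 + ρ z0 z2 - ρ z1 z2 = tau a (level z0) - tau a (level z1) ∧
    tau a (level z0) - tau a (level z1) ≤ 0 := by
  obtain ⟨i, hi⟩ := h1
  obtain ⟨j, hj⟩ := h2
  obtain ⟨k, hk⟩ := h3
  have hmn : level z1 ≤ level z0 := by
    rw [hi]; exact (iter_lnb i hz0).2.2
  have A := left_add hρ i z0 hz0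
  rw [← hi] at A
  have B := right_add hρ j z0 hz0
  rw [← hj] at B
  have C := right_add hρ k z1 hz1
  rw [← hk] at C
  have T0 := tau_fact hρ (level z0) z0 hz0 rfl hl0
  have T1 := tau_fact hρ (level z1) z1 hz1 rfl hl1
  constructor
  · linarith
  · have := tau_anti ha0 ha hmn
    linarith
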